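/- Every derivation of the algebra UT_ℓ(F) of upper triangular ℓ×ℓ matrices over a field F is inner. -/

import Mathlib

def upperTriangularAlgebra (F : Type*) [Field F] (ℓ : ℕ) :
    Subalgebra F (Matrix (Fin ℓ) (Fin ℓ) F) where
  carrier := {M | M.BlockTriangular id}
  mul_mem' := fun ha hb => Matrix.BlockTriangular.mul ha hb
  add_mem' := fun ha hb => Matrix.BlockTriangular.add ha hb
  one_mem' := Matrix.blockTriangular_one
  zero_mem' := Matrix.blockTriangular_zero
  algebraMap_mem' := fun c => by
    rw [Matrix.algebraMap_eq_diagonal]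
    exact Matrix.blockTriangular_diagonal _

set_option synthInstance.maxHeartbeats 1000000
set_option maxHeartbeats 1000000
set_option synthInstance.maxHeartbeats 4000000
set_option maxHeartbeats 16000000

namespace UTDeriv

open Matrix Finset

variable {F : Type*} [Field F] {ℓ : ℕ}

/-- Matrix units inside the subalgebra, junk value `0` when not upper triangular. -/
noncomputable def E (F : Type*) [Field F] {ℓ : ℕ} (i j : Fin ℓ) : upperTriangularAlgebra F ℓ :=
  if h : i ≤ j then ⟨Matrix.single i j 1, by
    intro a b hba
    by_cases hia : i = a
    · by_cases hjb : j = b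
      · subst hia; subst hjb; exact absurd hba (not_lt.2 h)
      · simp [Matrix.single, hjb]
    · simp [Matrix.single, hia]⟩
  else 0

lemma E_coe (i j : Fin ℓ) (h : i ≤ j) :
    ((E F i j : upperTriangularAlgebra F ℓ) : Matrix (Fin ℓ) (Fin ℓ) F) =
      Matrix.single i j 1 := by
  rw [E, dif_pos h]

lemma E_zero (i j : Fin ℓ) (h : ¬ i ≤ j) : (E F i j) = 0 := by
  rw [E, dif_neg h]

lemma E_mul_same {i j k : Fin ℓ} (hij : i ≤ j) (hjk : j ≤ k) :
    E F i j * E F j k = E F i k := by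
  apply Subtype.ext
  rw [MulMemClass.coe_mul, E_coe _ _ hij, E_coe _ _ hjk, E_coe _ _ (hij.trans hjk)]
  rw [Matrix.single_mul_single_same, one_mul]

lemma E_mul_ne {i j k l : Fin ℓ} (hij : i ≤ j) (hkl : k ≤ l) (h : j ≠ k) :
    E F i j * E F k l = 0 := by
  apply Subtype.ext
  rw [MulMemClass.coe_mul, E_coe _ _ hij, E_coe _ _ hkl]
  rw [Matrix.single_mul_single_of_ne (h := h)]
  rfl

lemma corner (x : upperTriangularAlgebra F ℓ) (i j : Fin ℓ) (hij : i ≤ j) :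
    E F i i * x * E F j j = ((x : Matrix (Fin ℓ) (Fin ℓ) F) i j) • E F i j := by
  apply Subtype.ext
  rw [MulMemClass.coe_mul, MulMemClass.coe_mul, E_coe _ _ le_rfl, E_coe _ _ le_rfl,
    SetLike.val_smul, E_coe _ _ hij, smul_single, smul_eq_mul, mul_one]
  ext a b
  by_cases hb : b = j
  · subst hb
    rw [Matrix.mul_single_apply_same]
    by_cases ha : a = i
    · subst ha
      rw [Matrix.single_mul_apply_same, Matrix.single_apply_same,
        one_mul, mul_one]
    · rw [Matrix.single_mul_apply_of_ne _ _ _ _ _ ha,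
        Matrix.single_apply_of_ne _ _ _ _ _ (by tauto), zero_mul]
  · rw [Matrix.mul_single_apply_of_ne _ _ _ _ _ hb,
      Matrix.single_apply_of_ne _ _ _ _ _ (by tauto)]

lemma sum_e : (∑ i, E F i i) = (1 : upperTriangularAlgebra F ℓ) := by
  apply Subtype.ext
  rw [AddSubmonoidClass.coe_finset_sum]
  have hcoe : ∀ i : Fin ℓ, ((E F i i : upperTriangularAlgebra F ℓ) : Matrix (Fin ℓ) (Fin ℓ) F)
      = Matrix.single i i 1 := fun i => E_coe i i le_rfl
  simp only [hcoe]
  rw [OneMemClass.coe_one]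
  ext a b
  rw [Matrix.sum_apply]
  by_cases hab : a = b
  · subst hab
    rw [Matrix.one_apply_eq, Finset.sum_eq_single a]
    · exact Matrix.single_apply_same a a 1
    · intro i _ hi
      exact Matrix.single_apply_of_ne _ _ _ _ _ (by tauto)
    · intro h; exact absurd (Finset.mem_univ a) h
  · rw [Matrix.one_apply_ne hab]
    refine Finset.sum_eq_zero fun i _ => ?_
    exact Matrix.single_apply_of_ne _ _ _ _ _ (by rintro ⟨rfl, rfl⟩; exact hab rfl)

lemma decomp (x : upperTriangularAlgebra F ℓ) :
    x = ∑ i, ∑ j, ((x : Matrix (Fin ℓ) (Fin ℓ) F) i j) • E F i j := by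
  apply Subtype.ext
  rw [AddSubmonoidClass.coe_finset_sum]
  simp_rw [AddSubmonoidClass.coe_finset_sum, SetLike.val_smul]
  have : ∀ i j : Fin ℓ, ((x : Matrix (Fin ℓ) (Fin ℓ) F) i j) •
      ((E F i j : upperTriangularAlgebra F ℓ) : Matrix (Fin ℓ) (Fin ℓ) F)
      = Matrix.single i j ((x : Matrix (Fin ℓ) (Fin ℓ) F) i j) := by
    intro i j
    by_cases h : i ≤ j
    · rw [E_coe _ _ h, smul_single, smul_eq_mul, mul_one]
    · have hx : (x : Matrix (Fin ℓ) (Fin ℓ) F) i j = 0 := x.2 (lt_of_not_ge h)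
      rw [hx, E_zero _ _ h]
      simp
  simp_rw [this]
  exact Matrix.matrix_eq_sum_single _

end UTDeriv

open UTDeriv in
/-- every derivation of the algebra `UT_ℓ(F)` of upper triangular `ℓ×ℓ` matrices
over a field `F` is inner: `D = ad(s)` for some `s ∈ UT_ℓ(F)`. -/
theorem upper_triangular_derivations_inner (F : Type*) [Field F] (ℓ : ℕ)
    (D : upperTriangularAlgebra F ℓ →ₗ[F] upperTriangularAlgebra F ℓ)
    (hD : ∀ a b, D (a * b) = D a * b + a * D b) :
    ∃ s : upperTriangularAlgebra F ℓ, ∀ m, D m = s * m - m * s := by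
  classical
  rcases Nat.eq_zero_or_pos ℓ with rfl | hpos
  · refine ⟨0, fun m => ?_⟩
    apply Subtype.ext
    ext i j
    exact i.elim0
  haveI : NeZero ℓ := ⟨hpos.ne'⟩
  -- Step 1: corner of D(e_i) vanishes
  have hcorner0 : ∀ i : Fin ℓ, E F i i * D (E F i i) * E F i i = 0 := by
    intro i
    have hee : E F i i * E F i i = E F i i := E_mul_same le_rfl le_rfl
    have h := hD (E F i i) (E F i i)
    rw [hee] at h
    have h2 : E F i i * D (E F i i) * E F i i
        = E F i i * D (E F i i) * E F i i + E F i i * D (E F i i) * E F i i := by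
      calc E F i i * D (E F i i) * E F i i
          = E F i i * (D (E F i i) * E F i i + E F i i * D (E F i i)) * E F i i := by
            rw [← h]
        _ = E F i i * D (E F i i) * (E F i i * E F i i)
            + (E F i i * E F i i) * (D (E F i i) * E F i i) := by noncomm_ring
        _ = E F i i * D (E F i i) * E F i i + E F i i * (D (E F i i) * E F i i) := by
            rw [hee]
        _ = E F i i * D (E F i i) * E F i i + E F i i * D (E F i i) * E F i i := by
            rw [mul_assoc]
    exact left_eq_add.mp h2
  -- Step 2: mixed relation
  have hmix : ∀ i j : Fin ℓ, i ≠ j →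
      E F j j * D (E F i i) = -(D (E F j j) * E F i i) := by
    intro i j hij
    have h0 : E F j j * E F i i = 0 := E_mul_ne le_rfl le_rfl (Ne.symm hij)
    have h := hD (E F j j) (E F i i)
    rw [h0, map_zero] at h
    exact eq_neg_of_add_eq_zero_right h.symm
  -- s1
  set s1 : upperTriangularAlgebra F ℓ := ∑ i, D (E F i i) * E F i i with hs1
  have hclaim1 : ∀ j, D (E F j j) = s1 * E F j j - E F j j * s1 := by
    intro j
    have hleft : s1 * E F j j = D (E F j j) * E F j j := by
      rw [hs1, Finset.sum_mul, Finset.sum_eq_single j]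
      · rw [mul_assoc, E_mul_same le_rfl le_rfl]
      · intro i _ hij
        rw [mul_assoc, E_mul_ne le_rfl le_rfl hij, mul_zero]
      · intro h; exact absurd (Finset.mem_univ j) h
    have hsum_erase : (∑ i ∈ Finset.univ.erase j, E F i i)
        = 1 - E F j j := by
      have h := Finset.add_sum_erase Finset.univ (fun i => E F i i) (Finset.mem_univ j)
      rw [sum_e] at h
      exact eq_sub_of_add_eq' h
    have hright : E F j j * s1 = -D (E F j j) + D (E F j j) * E F j j := by
      rw [hs1, Finset.mul_sum, ← Finset.add_sum_erase Finset.univ _ (Finset.mem_univ j)]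
      have hterm : E F j j * (D (E F j j) * E F j j) = 0 := by
        rw [← mul_assoc]; exact hcorner0 j
      rw [hterm, zero_add]
      have hco : ∀ i ∈ Finset.univ.erase j, E F j j * (D (E F i i) * E F i i)
          = -(D (E F j j) * E F i i) := by
        intro i hi
        have hij : i ≠ j := (Finset.mem_erase.mp hi).1
        rw [← mul_assoc, hmix i j hij,
          neg_mul (D (E F j j) * E F i i) (E F i i), mul_assoc,
          E_mul_same le_rfl le_rfl]
      rw [Finset.sum_congr rfl hco, Finset.sum_neg_distrib, ← Finset.mul_sum, hsum_erase,
        mul_sub, mul_one]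
      abel
    rw [hleft, hright]; abel
  -- D1
  set D1 : upperTriangularAlgebra F ℓ →ₗ[F] upperTriangularAlgebra F ℓ :=
    D - (LinearMap.mulLeft F s1 - LinearMap.mulRight F s1) with hD1def
  have hD1apply : ∀ m, D1 m = D m - (s1 * m - m * s1) := by
    intro m
    rw [hD1def]
    simp only [LinearMap.sub_apply, LinearMap.mulLeft_apply, LinearMap.mulRight_apply]
  have hD1 : ∀ a b, D1 (a * b) = D1 a * b + a * D1 b := by
    intro a b
    rw [hD1apply, hD1apply, hD1apply, hD a b]
    rw [sub_mul, mul_sub, sub_mul, mul_sub]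
    rw [mul_assoc s1 a b, ← mul_assoc a s1 b, ← mul_assoc a b s1]
    abel
  have hD1e : ∀ i, D1 (E F i i) = 0 := by
    intro i
    rw [hD1apply, hclaim1 i, sub_self]
  -- key: D1 (E i j) is a scalar multiple of E i j
  have hkey : ∀ i j : Fin ℓ, i ≤ j →
      D1 (E F i j) = (((D1 (E F i j) : upperTriangularAlgebra F ℓ) :
        Matrix (Fin ℓ) (Fin ℓ) F) i j) • E F i j := by
    intro i j hij
    have h1 : D1 (E F i j) = E F i i * D1 (E F i j) := by
      have h := hD1 (E F i i) (E F i j)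
      rw [E_mul_same le_rfl hij, hD1e i, zero_mul, zero_add] at h
      exact h
    have h2 : D1 (E F i j) = D1 (E F i j) * E F j j := by
      have h := hD1 (E F i j) (E F j j)
      rw [E_mul_same hij le_rfl, hD1e j, mul_zero, add_zero] at h
      exact h
    calc D1 (E F i j) = E F i i * D1 (E F i j) := h1
      _ = E F i i * (D1 (E F i j) * E F j j) := by rw [← h2]
      _ = E F i i * D1 (E F i j) * E F j j := (mul_assoc _ _ _).symm
      _ = _ := corner _ i j hij
  -- additivity of the scalars
  have hlam_add : ∀ i j k : Fin ℓ, i ≤ j → j ≤ k →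
      ((D1 (E F i k) : Matrix (Fin ℓ) (Fin ℓ) F) i k)
        = ((D1 (E F i j) : Matrix (Fin ℓ) (Fin ℓ) F) i j)
          + ((D1 (E F j k) : Matrix (Fin ℓ) (Fin ℓ) F) j k) := by
    intro i j k hij hjk
    have h := hD1 (E F i j) (E F j k)
    rw [E_mul_same hij hjk] at h
    conv_rhs at h => rw [hkey i j hij, hkey j k hjk]
    rw [smul_mul_assoc, mul_smul_comm, E_mul_same hij hjk, ← add_smul] at h
    rw [hkey i k (hij.trans hjk)] at h
    have h3 := congrArg (fun x : upperTriangularAlgebra F ℓ =>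
      ((x : Matrix (Fin ℓ) (Fin ℓ) F)) i k) h
    simp only [SetLike.val_smul, Matrix.smul_apply, E_coe _ _ (hij.trans hjk),
      Matrix.single_apply_same, smul_eq_mul, mul_one] at h3
    exact h3
  -- t
  set t : upperTriangularAlgebra F ℓ :=
    ∑ k, (-((D1 (E F 0 k) : Matrix (Fin ℓ) (Fin ℓ) F) 0 k)) • E F k k with ht
  have hclaim2 : ∀ i j : Fin ℓ, i ≤ j → D1 (E F i j) = t * E F i j - E F i j * t := by
    intro i j hij
    have hleft : t * E F i j
        = (-((D1 (E F 0 i) : Matrix (Fin ℓ) (Fin ℓ) F) 0 i)) • E F i j := by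
      rw [ht, Finset.sum_mul, Finset.sum_eq_single i]
      · rw [smul_mul_assoc, E_mul_same le_rfl hij]
      · intro k _ hk
        rw [smul_mul_assoc, E_mul_ne le_rfl hij hk, smul_zero]
      · intro h; exact absurd (Finset.mem_univ i) h
    have hright : E F i j * t
        = (-((D1 (E F 0 j) : Matrix (Fin ℓ) (Fin ℓ) F) 0 j)) • E F i j := by
      rw [ht, Finset.mul_sum, Finset.sum_eq_single j]
      · rw [mul_smul_comm, E_mul_same hij le_rfl]
      · intro k _ hk
        rw [mul_smul_comm, E_mul_ne hij le_rfl (Ne.symm hk), smul_zero]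
      · intro h; exact absurd (Finset.mem_univ j) h
    rw [hleft, hright, ← sub_smul, hkey i j hij]
    congr 1
    have hadd := hlam_add 0 i j (Fin.zero_le i) hij
    rw [hadd]
    ring
  -- conclude: D1 = ad t
  have hfinal : ∀ m, D1 m = t * m - m * t := by
    intro m
    have hm := decomp m
    calc D1 m
        = D1 (∑ i, ∑ j, ((m : Matrix (Fin ℓ) (Fin ℓ) F) i j) • E F i j) := by rw [← hm]
      _ = ∑ i, ∑ j, ((m : Matrix (Fin ℓ) (Fin ℓ) F) i j) • D1 (E F i j) := by
          rw [map_sum]; simp_rw [map_sum, map_smul]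
      _ = ∑ i, ∑ j, ((m : Matrix (Fin ℓ) (Fin ℓ) F) i j) • (t * E F i j - E F i j * t) := by
          refine Finset.sum_congr rfl fun i _ => Finset.sum_congr rfl fun j _ => ?_
          by_cases hij : i ≤ j
          · rw [hclaim2 i j hij]
          · rw [E_zero _ _ hij, map_zero, mul_zero, zero_mul, sub_zero]
      _ = t * (∑ i, ∑ j, ((m : Matrix (Fin ℓ) (Fin ℓ) F) i j) • E F i j)
          - (∑ i, ∑ j, ((m : Matrix (Fin ℓ) (Fin ℓ) F) i j) • E F i j) * t := by
          rw [Finset.mul_sum, Finset.sum_mul, ← Finset.sum_sub_distrib]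
          refine Finset.sum_congr rfl fun i _ => ?_
          rw [Finset.mul_sum, Finset.sum_mul, ← Finset.sum_sub_distrib]
          refine Finset.sum_congr rfl fun j _ => ?_
          rw [smul_sub, mul_smul_comm, smul_mul_assoc]
      _ = t * m - m * t := by rw [← hm]
  refine ⟨s1 + t, fun m => ?_⟩
  have h := hfinal m
  rw [hD1apply] at h
  have h2 : D m = (s1 * m - m * s1) + (t * m - m * t) := by rw [← h]; abel
  rw [h2]; noncomm_ring
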